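/- The section κ1 = K ∩ Π1 is a face of K = conv(C1 ∪ C2) if and only if C2 lies entirely in one of the closed half-spaces bounded by Π1. -/

import Mathlib

noncomputable section

abbrev E3 := EuclideanSpace ℝ (Fin 3)

/-- `Π` is an affine plane in `ℝ³`. -/
def IsPlane (P : AffineSubspace ℝ E3) : Prop := Module.finrank ℝ P.direction = 2

/-- `C` is a circle lying in the plane `P`. -/
def IsCircleIn (P : AffineSubspace ℝ E3) (C : Set E3) : Prop :=
  ∃ (c : E3) (r : ℝ), c ∈ P ∧ 0 < r ∧ C = {x | x ∈ P ∧ dist x c = r}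

lemma plane_levelset (P : AffineSubspace ℝ E3) (hP : IsPlane P) {p : E3} (hp : p ∈ P) :
    ∃ f : E3 →L[ℝ] ℝ, f ≠ 0 ∧ (P : Set E3) = {x | f x = f p} := by
  have h3 : Module.finrank ℝ E3 = 3 := finrank_euclideanSpace_fin
  have hne : P.direction ≠ ⊤ := by
    intro h
    rw [IsPlane, h, finrank_top, h3] at hP
    exact absurd hP (by norm_num)
  have hob : P.directionᗮ ≠ ⊥ := by
    rw [Ne, Submodule.orthogonal_eq_bot_iff]
    exact hne
  obtain ⟨v, hvmem, hv0⟩ := Submodule.exists_mem_ne_zero_of_ne_bot hob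
  refine ⟨innerSL ℝ v, ?_, ?_⟩
  · intro h
    have : (innerSL ℝ v) v = 0 := by rw [h]; rfl
    rw [innerSL_apply_apply, real_inner_self_eq_norm_sq] at this
    exact hv0 (by simpa using this)
  · have hdir : P.direction = (Submodule.span ℝ {v})ᗮ := by
      refine Submodule.eq_of_le_of_finrank_eq ?_ ?_
      · intro u hu
        rw [Submodule.mem_orthogonal_singleton_iff_inner_right]
        rw [real_inner_comm]
        exact (Submodule.mem_orthogonal P.direction v).mp hvmem u hu
      · have := Submodule.finrank_add_finrank_orthogonal (𝕜 := ℝ) (Submodule.span ℝ {v})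
        rw [finrank_span_singleton hv0, h3] at this
        rw [hP]; omega
    ext x
    simp only [Set.mem_setOf_eq, SetLike.mem_coe, innerSL_apply_apply]
    constructor
    · intro hx
      have := AffineSubspace.vsub_mem_direction hx hp
      rw [hdir, Submodule.mem_orthogonal_singleton_iff_inner_right] at this
      have hsub : (inner ℝ v (x - p) : ℝ) = 0 := by simpa using this
      rw [inner_sub_right] at hsub
      linarith
    · intro hx
      have hsub : (inner ℝ v (x - p) : ℝ) = 0 := by rw [inner_sub_right]; linarith
      have hmem : x - p ∈ P.direction := by
        rw [hdir, Submodule.mem_orthogonal_singleton_iff_inner_right]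
        simpa using hsub
      have := AffineSubspace.vadd_mem_of_mem_direction hmem hp
      simpa [vadd_eq_add, sub_add_cancel] using this

/-- The section `κ₁ = K ∩ Π₁` is a face of `K = conv (C₁ ∪ C₂)` if and only if `C₂` lies
entirely in one of the closed half-spaces bounded by `Π₁`. -/
theorem stmt_4 (P₁ P₂ : AffineSubspace ℝ E3) (hP₁ : IsPlane P₁) (hP₂ : IsPlane P₂)
    (hne : P₁ ≠ P₂) (C₁ C₂ : Set E3) (hC₁ : IsCircleIn P₁ C₁) (hC₂ : IsCircleIn P₂ C₂) :
    IsExtreme ℝ (convexHull ℝ (C₁ ∪ C₂)) (convexHull ℝ (C₁ ∪ C₂) ∩ (P₁ : Set E3))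
      ↔ ∃ (f : E3 →L[ℝ] ℝ) (c : ℝ), f ≠ 0 ∧ (P₁ : Set E3) = {x | f x = c} ∧
          ∀ x ∈ C₂, f x ≤ c := by
  obtain ⟨c₁, r₁, hc₁P, hr₁, hC₁eq⟩ := hC₁
  set K := convexHull ℝ (C₁ ∪ C₂) with hK
  constructor
  · -- forward direction
    intro hext
    obtain ⟨f, hf0, hPset⟩ := plane_levelset P₁ hP₁ hc₁P
    set c : ℝ := f c₁ with hc
    -- key: C₂ cannot have points strictly on both sides
    have key : ∀ p ∈ C₂, ∀ q ∈ C₂, c < f p → f q < c → False := by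
      intro p hp q hq hpc hqc
      set t : ℝ := (f p - c) / (f p - f q) with ht
      have hpq : 0 < f p - f q := by linarith
      have ht0 : 0 < t := div_pos (by linarith) hpq
      have ht1 : t < 1 := (div_lt_one hpq).mpr (by linarith)
      set z : E3 := (1 - t) • p + t • q with hz
      have hzseg : z ∈ openSegment ℝ p q := ⟨1 - t, t, by linarith, ht0, by ring, rfl⟩
      have hpK : p ∈ K := subset_convexHull ℝ _ (Set.mem_union_right _ hp)
      have hqK : q ∈ K := subset_convexHull ℝ _ (Set.mem_union_right _ hq)
      have hzK : z ∈ K := (convex_convexHull ℝ _).openSegment_subset hpK hqK hzseg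
      have hfz : f z = c := by
        have : f z = (1 - t) * f p + t * f q := by
          simp [hz, map_add, map_smul, smul_eq_mul]
        rw [this, ht]
        field_simp
        ring
      have hzP : z ∈ (P₁ : Set E3) := by rw [hPset]; exact hfz
      have := hext.2 hpK hqK ⟨hzK, hzP⟩ hzseg
      have hpc' : f p = c := by
        have := this.2
        rw [hPset] at this
        exact this
      linarith
    by_cases hall : ∀ x ∈ C₂, f x ≤ c
    · exact ⟨f, c, hf0, hPset, hall⟩
    · push_neg at hall
      obtain ⟨p, hp, hpc⟩ := hall
      refine ⟨-f, -c, by simpa using hf0, ?_, ?_⟩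
      · rw [hPset]
        ext x
        simp [neg_eq_iff_eq_neg, eq_comm]
      · intro q hq
        simp only [ContinuousLinearMap.neg_apply, neg_le_neg_iff]
        by_contra hqc
        push_neg at hqc
        exact key p hp q hq hpc hqc
  · -- backward direction
    rintro ⟨f, c, hf0, hPset, hC₂le⟩
    have hC₁sub : C₁ ⊆ (P₁ : Set E3) := by
      rw [hC₁eq]; intro x hx; exact hx.1
    have hKle : K ⊆ {x | f x ≤ c} := by
      rw [hK]
      apply convexHull_min
      · rintro x (hx | hx)
        · have : f x = c := by have := hC₁sub hx; rwa [hPset] at this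
          exact le_of_eq this
        · exact hC₂le x hx
      · exact convex_halfSpace_le ⟨f.map_add, f.map_smul⟩ c
    constructor
    · exact Set.inter_subset_left
    · intro x₁ hx₁ x₂ hx₂ x hx hxseg
      obtain ⟨a, b, ha, hb, hab, hsum⟩ := hxseg
      have hfx : f x = c := by have := hx.2; rwa [hPset] at this
      have h1 : f x₁ ≤ c := hKle hx₁
      have h2 : f x₂ ≤ c := hKle hx₂
      have hsum' : a * f x₁ + b * f x₂ = c := by
        rw [← hfx, ← hsum]; simp [map_add, map_smul, smul_eq_mul]
      have hcc : a * c + b * c = c := by rw [← add_mul, hab, one_mul]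
      have he1 : f x₁ = c := by
        by_contra h
        have hlt : f x₁ < c := lt_of_le_of_ne h1 h
        have h1' : a * f x₁ < a * c := mul_lt_mul_of_pos_left hlt ha
        have h2' : b * f x₂ ≤ b * c := mul_le_mul_of_nonneg_left h2 hb.le
        linarith
      have he2 : f x₂ = c := by
        by_contra h
        have hlt : f x₂ < c := lt_of_le_of_ne h2 h
        have h1' : a * f x₁ ≤ a * c := mul_le_mul_of_nonneg_left h1 ha.le
        have h2' : b * f x₂ < b * c := mul_lt_mul_of_pos_left hlt hb
        linarith
      exact ⟨hx₁, by rw [hPset]; exact he1⟩
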